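/- Fix r ≥ 2 even and g ≥ 2, and let A : (ℤ/r)^{2g} → ℤ/2 be A(s₁,t₁,…,s_g,t_g) = ∑ᵢ(sᵢ+1)(tᵢ+1) mod 2. Then the number of tuples δ ∈ (ℤ/r)^{2g} with A(δ) = 0 is r^{2g}(2^g+1)/2^{g+1}, and the number with A(δ) = 1 is r^{2g}(2^g−1)/2^{g+1}. -/

import Mathlib

open Finset

abbrev RootTuple (r g : ℕ) := Fin g → ZMod r × ZMod r

def atiyahInv (r g : ℕ) (h2 : 2 ∣ r) (δ : RootTuple r g) : ZMod 2 :=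
  ∑ i : Fin g,
    (ZMod.castHom h2 (ZMod 2) (δ i).1 + 1) * (ZMod.castHom h2 (ZMod 2) (δ i).2 + 1)

section Aux

variable {r : ℕ} [NeZero r]

def cpair (h2 : 2 ∣ r) (x : ZMod r × ZMod r) : ZMod 2 :=
  (ZMod.castHom h2 (ZMod 2) x.1 + 1) * (ZMod.castHom h2 (ZMod 2) x.2 + 1)

def Ncount (h2 : 2 ∣ r) (g : ℕ) (e : ZMod 2) : ℕ :=
  (univ.filter (fun δ : Fin g → ZMod r × ZMod r => (∑ i, cpair h2 (δ i)) = e)).card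

lemma ker_count (h2 : 2 ∣ r) :
    (univ.filter (fun a : ZMod r => ZMod.castHom h2 (ZMod 2) a = 0)).card = r / 2 := by
  set φ := (ZMod.castHom h2 (ZMod 2)).toAddMonoidHom with hφ
  have hsurj : Function.Surjective φ := ZMod.ringHom_surjective (ZMod.castHom h2 (ZMod 2))
  have hker : (univ.filter (fun a : ZMod r => ZMod.castHom h2 (ZMod 2) a = 0)).card
      = Nat.card φ.ker := by
    rw [Nat.card_eq_fintype_card, Fintype.card_subtype]
    congr 1; ext a; simp only [Finset.mem_filter, Finset.mem_univ, true_and, AddMonoidHom.mem_ker, hφ]; rfl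
  have h := AddSubgroup.card_eq_card_quotient_mul_card_addSubgroup (α := ZMod r) φ.ker
  have hq : Nat.card (ZMod r ⧸ φ.ker) = 2 := by
    rw [Nat.card_congr (QuotientAddGroup.quotientKerEquivOfSurjective φ hsurj).toEquiv]
    simp [Nat.card_eq_fintype_card]
  have hcard : Nat.card (ZMod r) = r := by simp [Nat.card_eq_fintype_card]
  rw [hq, hcard] at h
  rw [hker]; omega

lemma cpair_one_count (h2 : 2 ∣ r) :
    (univ.filter (fun x : ZMod r × ZMod r => cpair h2 x = 1)).card = (r / 2) ^ 2 := by
  have hiff : ∀ a b : ZMod 2, (a + 1) * (b + 1) = 1 ↔ a = 0 ∧ b = 0 := by decide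
  have hpred : (univ.filter (fun x : ZMod r × ZMod r => cpair h2 x = 1)) =
      (univ.filter (fun x : ZMod r × ZMod r =>
        ZMod.castHom h2 (ZMod 2) x.1 = 0 ∧ ZMod.castHom h2 (ZMod 2) x.2 = 0)) := by
    apply Finset.filter_congr; intro x _; exact hiff _ _
  have : (univ.filter (fun x : ZMod r × ZMod r => cpair h2 x = 1)) =
      (univ.filter (fun a : ZMod r => ZMod.castHom h2 (ZMod 2) a = 0)) ×ˢ
      (univ.filter (fun a : ZMod r => ZMod.castHom h2 (ZMod 2) a = 0)) := by
    rw [hpred]; ext x; simp only [Finset.mem_filter, Finset.mem_univ, true_and, Finset.mem_product]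
  rw [this, Finset.card_product, ker_count h2]; ring

lemma cpair_zero_count (hr : 2 ≤ r) (h2 : 2 ∣ r) :
    (univ.filter (fun x : ZMod r × ZMod r => cpair h2 x = 0)).card = 3 * (r / 2) ^ 2 := by
  have h := Finset.card_filter_add_card_filter_not
    (s := (univ : Finset (ZMod r × ZMod r))) (p := fun x => cpair h2 x = 1)
  have h1 := cpair_one_count h2
  have hne : (univ.filter (fun x : ZMod r × ZMod r => ¬ cpair h2 x = 1)) =
      (univ.filter (fun x : ZMod r × ZMod r => cpair h2 x = 0)) := by
    apply Finset.filter_congr; intro x _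
    constructor
    · intro hx; revert hx; generalize cpair h2 x = v; revert v; decide
    · intro hx; rw [hx]; decide
  rw [h1, hne] at h
  have hcu : (univ : Finset (ZMod r × ZMod r)).card = r * r := by
    simp [Finset.card_univ, ZMod.card]
  rw [hcu] at h
  obtain ⟨k, hk⟩ := id h2
  subst hk
  have : (2 * k) / 2 = k := by omega
  rw [this] at h ⊢
  nlinarith

lemma Ncount_zero (h2 : 2 ∣ r) (e : ZMod 2) :
    Ncount h2 0 e = if e = 0 then 1 else 0 := by
  unfold Ncount
  rcases eq_or_ne e 0 with he | he <;> simp [he, eq_comm]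

lemma Ncount_succ (hr : 2 ≤ r) (h2 : 2 ∣ r) (g : ℕ) (e : ZMod 2) :
    Ncount h2 (g + 1) e =
      3 * (r / 2) ^ 2 * Ncount h2 g e + (r / 2) ^ 2 * Ncount h2 g (e + 1) := by
  have key' : ∀ (e v w : ZMod 2), (v + w = e) ↔ w = e + v := by decide
  have key := key' e
  unfold Ncount
  rw [Finset.card_filter]
  rw [← Equiv.sum_comp (Fin.consEquiv (fun _ : Fin (g + 1) => ZMod r × ZMod r))
    (fun δ => if (∑ i, cpair h2 (δ i)) = e then (1 : ℕ) else 0)]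
  have hsplit : ∀ p : (ZMod r × ZMod r) × (Fin g → ZMod r × ZMod r),
      (∑ i, cpair h2 ((Fin.consEquiv (fun _ : Fin (g + 1) => ZMod r × ZMod r) p) i)) =
        cpair h2 p.1 + ∑ i, cpair h2 (p.2 i) := by
    intro p
    simp [Fin.consEquiv, Fin.sum_univ_succ]
  simp only [hsplit]
  rw [Fintype.sum_prod_type]
  have hinner : ∀ x : ZMod r × ZMod r,
      (∑ δ : Fin g → ZMod r × ZMod r,
        if cpair h2 x + ∑ i, cpair h2 (δ i) = e then (1 : ℕ) else 0) =
        Ncount h2 g (e + cpair h2 x) := by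
    intro x
    unfold Ncount
    rw [Finset.card_filter]
    apply Finset.sum_congr rfl
    intro δ _
    simp only [key]
  simp only [hinner]
  have hcases : ∀ x : ZMod r × ZMod r,
      Ncount h2 g (e + cpair h2 x) =
        if cpair h2 x = 1 then Ncount h2 g (e + 1) else Ncount h2 g e := by
    intro x
    have : cpair h2 x = 0 ∨ cpair h2 x = 1 := by
      generalize cpair h2 x = v; revert v; decide
    rcases this with h | h <;> simp [h]
  simp only [hcases]
  rw [Finset.sum_ite, Finset.sum_const, Finset.sum_const]
  have hnot : (univ.filter (fun x : ZMod r × ZMod r => ¬ cpair h2 x = 1)) =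
      (univ.filter (fun x : ZMod r × ZMod r => cpair h2 x = 0)) := by
    apply Finset.filter_congr; intro x _
    have : cpair h2 x = 0 ∨ cpair h2 x = 1 := by
      generalize cpair h2 x = v; revert v; decide
    rcases this with h | h <;> simp [h]
  rw [hnot, cpair_one_count h2, cpair_zero_count hr h2]
  simp only [smul_eq_mul]
  unfold Ncount
  rw [add_comm e 1]
  ring

lemma Ncount_sum (hr : 2 ≤ r) (h2 : 2 ∣ r) :
    ∀ g, Ncount h2 g 0 + Ncount h2 g 1 = (4 * (r / 2) ^ 2) ^ g := by
  intro g
  induction g with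
  | zero => simp [Ncount_zero]
  | succ g ih =>
    have h01 : (0 : ZMod 2) + 1 = 1 := by decide
    have h11 : (1 : ZMod 2) + 1 = 0 := by decide
    rw [Ncount_succ hr h2 g 0, Ncount_succ hr h2 g 1, h01, h11]
    calc 3 * (r / 2) ^ 2 * Ncount h2 g 0 + (r / 2) ^ 2 * Ncount h2 g 1 +
          (3 * (r / 2) ^ 2 * Ncount h2 g 1 + (r / 2) ^ 2 * Ncount h2 g 0)
        = 4 * (r / 2) ^ 2 * (Ncount h2 g 0 + Ncount h2 g 1) := by ring
      _ = 4 * (r / 2) ^ 2 * (4 * (r / 2) ^ 2) ^ g := by rw [ih]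
      _ = (4 * (r / 2) ^ 2) ^ (g + 1) := by ring

lemma Ncount_diff (hr : 2 ≤ r) (h2 : 2 ∣ r) :
    ∀ g, Ncount h2 g 0 = Ncount h2 g 1 + (2 * (r / 2) ^ 2) ^ g := by
  intro g
  induction g with
  | zero => simp [Ncount_zero]
  | succ g ih =>
    have h01 : (0 : ZMod 2) + 1 = 1 := by decide
    have h11 : (1 : ZMod 2) + 1 = 0 := by decide
    rw [Ncount_succ hr h2 g 0, Ncount_succ hr h2 g 1, h01, h11, ih]
    ring



end Aux

/-- The number of `r`-th roots of even (resp. odd) type equals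
`r^{2g}(2^g ± 1)/2^{g+1}`. -/
theorem count_even_odd_type (r g : ℕ) (hr : 2 ≤ r) (h2 : 2 ∣ r) (hg : 2 ≤ g) :
    Nat.card {δ : RootTuple r g // atiyahInv r g h2 δ = 0} =
      r ^ (2 * g) * (2 ^ g + 1) / 2 ^ (g + 1) ∧
    Nat.card {δ : RootTuple r g // atiyahInv r g h2 δ = 1} =
      r ^ (2 * g) * (2 ^ g - 1) / 2 ^ (g + 1) := by
  haveI : NeZero r := ⟨by omega⟩
  have hcard : ∀ e : ZMod 2,
      Nat.card {δ : RootTuple r g // atiyahInv r g h2 δ = e} = Ncount h2 g e := by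
    intro e
    rw [Nat.card_eq_fintype_card, Fintype.card_subtype]
    unfold Ncount cpair atiyahInv
    congr
  obtain ⟨k, hk⟩ := id h2
  have hdiv : r / 2 = k := by omega
  have hS := Ncount_sum hr h2 g
  have hD := Ncount_diff hr h2 g
  rw [hdiv] at hS hD
  set N0 := Ncount h2 g 0 with hN0
  set N1 := Ncount h2 g 1 with hN1
  have e1 : r ^ (2 * g) = (4 * k ^ 2) ^ g := by rw [hk, pow_mul]; congr 1; ring
  have e2 : (2 * k ^ 2) ^ g * 2 ^ g = (4 * k ^ 2) ^ g := by
    rw [← mul_pow]; congr 1; ring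
  have h0 : 2 * N0 = (4 * k ^ 2) ^ g + (2 * k ^ 2) ^ g := by omega
  have h1 : 2 * N1 + (2 * k ^ 2) ^ g = (4 * k ^ 2) ^ g := by omega
  have key0 : r ^ (2 * g) * (2 ^ g + 1) = N0 * 2 ^ (g + 1) := by
    have h0' : (2 * N0) * 2 ^ g = ((4 * k ^ 2) ^ g + (2 * k ^ 2) ^ g) * 2 ^ g := by rw [h0]
    calc r ^ (2 * g) * (2 ^ g + 1)
        = (4 * k ^ 2) ^ g * 2 ^ g + (4 * k ^ 2) ^ g := by rw [e1]; ring
      _ = (4 * k ^ 2) ^ g * 2 ^ g + (2 * k ^ 2) ^ g * 2 ^ g := by rw [e2]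
      _ = ((4 * k ^ 2) ^ g + (2 * k ^ 2) ^ g) * 2 ^ g := by ring
      _ = (2 * N0) * 2 ^ g := h0'.symm
      _ = N0 * 2 ^ (g + 1) := by ring
  have key1 : r ^ (2 * g) * (2 ^ g - 1) = N1 * 2 ^ (g + 1) := by
    have hb : 1 ≤ 2 ^ g := Nat.one_le_two_pow
    have h1' : (2 * N1 + (2 * k ^ 2) ^ g) * 2 ^ g = (4 * k ^ 2) ^ g * 2 ^ g := by rw [h1]
    have hstep : N1 * 2 ^ (g + 1) + r ^ (2 * g) = r ^ (2 * g) * 2 ^ g := by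
      calc N1 * 2 ^ (g + 1) + r ^ (2 * g)
          = (2 * N1) * 2 ^ g + (4 * k ^ 2) ^ g := by rw [e1]; ring
        _ = (2 * N1) * 2 ^ g + (2 * k ^ 2) ^ g * 2 ^ g := by rw [e2]
        _ = (2 * N1 + (2 * k ^ 2) ^ g) * 2 ^ g := by ring
        _ = (4 * k ^ 2) ^ g * 2 ^ g := h1'
        _ = r ^ (2 * g) * 2 ^ g := by rw [e1]
    have hsub : r ^ (2 * g) * (2 ^ g - 1) + r ^ (2 * g) = r ^ (2 * g) * 2 ^ g := by
      calc r ^ (2 * g) * (2 ^ g - 1) + r ^ (2 * g)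
          = r ^ (2 * g) * ((2 ^ g - 1) + 1) := by ring
        _ = r ^ (2 * g) * 2 ^ g := by rw [Nat.sub_add_cancel hb]
    omega
  have hpos : 0 < 2 ^ (g + 1) := Nat.pow_pos (by norm_num)
  constructor
  · rw [hcard 0, ← hN0, (Nat.div_eq_of_eq_mul_left hpos key0)]
  · rw [hcard 1, ← hN1, (Nat.div_eq_of_eq_mul_left hpos key1)]
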